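/- Comparison of the graph-metric and ultrametric p-adic Laplacians: for every bounded measurable u : Z → ℝ, sup_{x∈Z} |H_1 u(x) − H_2 u(x)| ≤ 2‖u‖_∞ · ∑_{(v,w) ∈ V×V, v ≠ w} C̃_{v,w}·μ(U_w), where C̃_{v,w} = α·|d_E(v,w) − δ(v,w)| / δ(v,w)^{α+1}. (Generator estimate underlying the semigroup comparison theorem for the operators H_{d_E} and H_δ.) -/

import Mathlib

open MeasureTheory

/-- The vertex whose ball contains `x` (junk value if there is none). -/
noncomputable def vertexOf {p : ℕ} [Fact p.Prime] {V : Type*} [Nonempty V]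
    (U : V → Set ℚ_[p]) (x : ℚ_[p]) : V :=
  haveI := Classical.propDecidable (∃ v, x ∈ U v)
  if h : ∃ v, x ∈ U v then h.choose else Classical.arbitrary V

/-- The kernel attached to a metric `ρ` on the vertex set:
`k(x,y) = |x − y|_p^{−α}` if `v(x) = v(y)`, and `k(x,y) = ρ(v(x),v(y))^{−α}`
otherwise. -/
noncomputable def metricKernel {p : ℕ} [Fact p.Prime] {V : Type*} [Nonempty V]
    [DecidableEq V] (U : V → Set ℚ_[p]) (ρ : V → V → ℝ) (α : ℝ)
    (x y : ℚ_[p]) : ℝ :=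
  if vertexOf U x = vertexOf U y then ‖x - y‖ ^ (-α)
  else ρ (vertexOf U x) (vertexOf U y) ^ (-α)

/-- The p-adic Laplacian attached to a metric `ρ` on the vertex set,
`H u (x) = ∫_Z k(x,y)(u(y) − u(x)) dμ(y)` on `Z = ⋃_v U_v`, the integrand being
taken to be `0` whenever `u(y) = u(x)`. -/
noncomputable def metricLaplacian {p : ℕ} [Fact p.Prime] {V : Type*} [Nonempty V]
    [DecidableEq V] [MeasurableSpace ℚ_[p]] (μ : Measure ℚ_[p])
    (U : V → Set ℚ_[p]) (ρ : V → V → ℝ) (α : ℝ) (u : ℚ_[p] → ℝ) (x : ℚ_[p]) : ℝ :=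
  haveI := fun y => Classical.propDecidable (u y = u x)
  ∫ y in ⋃ v, U v,
    (if u y = u x then 0 else metricKernel U ρ α x y * (u y - u x)) ∂μ

lemma vertexOf_eq {p : ℕ} [Fact p.Prime] {V : Type*} [Nonempty V]
    {U : V → Set ℚ_[p]} (hdisj : Pairwise (Function.onFun Disjoint U))
    {x : ℚ_[p]} {v : V} (hx : x ∈ U v) : vertexOf U x = v := by
  unfold vertexOf
  have hex : ∃ w, x ∈ U w := ⟨v, hx⟩
  rw [dif_pos hex]
  by_contra hne
  exact Set.disjoint_left.mp (hdisj hne) hex.choose_spec hx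

lemma rpow_aux {a b α : ℝ} (ha : 0 < a) (hab : a ≤ b) (hα : 1 ≤ α) :
    b ^ α - a ^ α ≤ α * b ^ (α - 1) * (b - a) := by
  have hb : 0 < b := ha.trans_le hab
  have h := Convex.norm_image_sub_le_of_norm_hasDerivWithin_le
    (f := fun x : ℝ => x ^ α) (f' := fun x : ℝ => α * x ^ (α - 1))
    (C := α * b ^ (α - 1)) (s := Set.Icc a b)
    (fun x hx => (Real.hasDerivAt_rpow_const (Or.inl (ne_of_gt (ha.trans_le hx.1)))).hasDerivWithinAt)
    (fun x hx => by
      show ‖α * x ^ (α - 1)‖ ≤ α * b ^ (α - 1)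
      have hx0 : 0 < x := ha.trans_le hx.1
      have h1 : x ^ (α - 1) ≤ b ^ (α - 1) := Real.rpow_le_rpow hx0.le hx.2 (by linarith)
      have h2 : (0:ℝ) ≤ x ^ (α - 1) := Real.rpow_nonneg hx0.le _
      rw [Real.norm_eq_abs, abs_of_nonneg (by nlinarith)]
      nlinarith)
    (convex_Icc a b) (Set.left_mem_Icc.2 hab) (Set.right_mem_Icc.2 hab)
  rw [Real.norm_eq_abs, Real.norm_eq_abs] at h
  calc b ^ α - a ^ α ≤ |b ^ α - a ^ α| := le_abs_self _
    _ ≤ α * b ^ (α - 1) * |b - a| := h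
    _ = α * b ^ (α - 1) * (b - a) := by rw [abs_of_nonneg (by linarith)]

lemma kernel_diff_le {a b α : ℝ} (ha : 0 < a) (hab : a ≤ b) (hα : 1 ≤ α) :
    a ^ (-α) - b ^ (-α) ≤ α * (b - a) / a ^ (α + 1) := by
  have hb : 0 < b := ha.trans_le hab
  have haα : (0:ℝ) < a ^ α := Real.rpow_pos_of_pos ha _
  have hbα : (0:ℝ) < b ^ α := Real.rpow_pos_of_pos hb _
  have key := rpow_aux ha hab hα
  have hsplit : b ^ (α - 1) = b ^ α / b := by
    rw [Real.rpow_sub hb, Real.rpow_one]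
  have h1 : a ^ (-α) - b ^ (-α) = (b ^ α - a ^ α) / (a ^ α * b ^ α) := by
    rw [Real.rpow_neg ha.le, Real.rpow_neg hb.le]
    field_simp
  have h2 : a ^ (α + 1) = a ^ α * a := by
    rw [Real.rpow_add ha, Real.rpow_one]
  rw [h1, h2]
  have h3 : (b ^ α - a ^ α) / (a ^ α * b ^ α) ≤ (α * b ^ (α - 1) * (b - a)) / (a ^ α * b ^ α) := by
    gcongr
  refine h3.trans ?_
  rw [hsplit]
  rw [div_le_div_iff₀ (by positivity) (by positivity)]
  have hba : 0 ≤ b - a := by linarith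
  have : α * (b ^ α / b) * (b - a) * (a ^ α * a) = (α * (b - a) * (a ^ α * b ^ α)) * (a / b) := by
    field_simp
  rw [this]
  have hab' : a / b ≤ 1 := (div_le_one hb).2 hab
  nlinarith [mul_nonneg (mul_nonneg (by linarith : (0:ℝ) ≤ α) hba) (mul_pos haα hbα).le]


/-- **Comparison of the graph-metric and ultrametric p-adic Laplacians**
(generator estimate underlying the semigroup comparison theorem for `H_{d_E}` and
`H_δ`): for bounded measurable `u`,
`sup_{x∈Z} |H₁u(x) − H₂u(x)| ≤ 2‖u‖_∞·∑_{v≠w} C̃_{v,w}·μ(U_w)`, where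
`C̃_{v,w} = α·|d_E(v,w) − δ(v,w)|/δ(v,w)^{α+1}`. -/
theorem metric_laplacian_comparison (p : ℕ) [Fact p.Prime]
    [MeasurableSpace ℚ_[p]] [BorelSpace ℚ_[p]]
    (μ : Measure ℚ_[p]) [μ.IsAddHaarMeasure]
    (hμ : μ {x : ℚ_[p] | ‖x‖ ≤ 1} = 1)
    {V : Type*} [Fintype V] [Nonempty V] [DecidableEq V]
    (U : V → Set ℚ_[p]) (bc : V → ℚ_[p]) (rad : V → ℤ)
    (hU : ∀ v, U v = {x : ℚ_[p] | ‖x - bc v‖ ≤ (p : ℝ) ^ (-(rad v))})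
    (hdisj : Pairwise (Function.onFun Disjoint U))
    (α : ℝ) (hα : 1 ≤ α)
    (dE δ : V → V → ℝ)
    (hdE_self : ∀ v, dE v v = 0) (hdE_symm : ∀ v w, dE v w = dE w v)
    (hdE_pos : ∀ v w, v ≠ w → 0 < dE v w)
    (hdE_triangle : ∀ u v w, dE u w ≤ dE u v + dE v w)
    (hδ_self : ∀ v, δ v v = 0) (hδ_symm : ∀ v w, δ v w = δ w v)
    (hδ_pos : ∀ v w, v ≠ w → 0 < δ v w)
    (hδ_triangle : ∀ u v w, δ u w ≤ δ u v + δ v w)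
    (hle : ∀ v w, δ v w ≤ dE v w)
    (u : ℚ_[p] → ℝ) (hu_meas : Measurable u)
    (hu_bdd : BddAbove (Set.range fun y => |u y|)) :
    ∀ x ∈ ⋃ v, U v,
      |metricLaplacian μ U dE α u x - metricLaplacian μ U δ α u x|
        ≤ 2 * (⨆ y, |u y|) *
          ∑ q ∈ Finset.univ.filter (fun q : V × V => q.1 ≠ q.2),
            (α * |dE q.1 q.2 - δ q.1 q.2| / δ q.1 q.2 ^ (α + 1))
              * (μ (U q.2)).toReal := by
  classical
  intro x hx
  set Z : Set ℚ_[p] := ⋃ v, U v with hZ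
  obtain ⟨v0, hv0⟩ : ∃ v, x ∈ U v := Set.mem_iUnion.mp hx
  have hvx : vertexOf U x = v0 := vertexOf_eq hdisj hv0
  set M : ℝ := ⨆ y, |u y| with hM
  have hMle : ∀ y, |u y| ≤ M := fun y => le_ciSup hu_bdd y
  have hM0 : 0 ≤ M := (abs_nonneg _).trans (hMle x)
  -- basic facts about the balls
  have hUball : ∀ v, U v = Metric.closedBall (bc v) ((p:ℝ) ^ (-(rad v))) := by
    intro v; rw [hU v]; ext y; simp [Metric.mem_closedBall, dist_eq_norm]
  have hUmeas : ∀ v, MeasurableSet (U v) := fun v => by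
    rw [hUball v]; exact measurableSet_closedBall
  have hUfin : ∀ v, μ (U v) < ⊤ := fun v => by
    rw [hUball v]; exact (isCompact_closedBall _ _).measure_lt_top
  have hZmeas : MeasurableSet Z := MeasurableSet.iUnion hUmeas
  have hZfin : μ Z < ⊤ :=
    lt_of_le_of_lt (measure_iUnion_fintype_le μ U)
      (ENNReal.sum_lt_top.mpr fun v _ => hUfin v)
  -- the difference function
  set h : ℚ_[p] → ℝ := fun y =>
    if u y = u x then 0
    else if v0 = vertexOf U y then 0
    else (dE v0 (vertexOf U y) ^ (-α) - δ v0 (vertexOf U y) ^ (-α)) * (u y - u x) with hh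
  -- pointwise identity
  set g₁ : ℚ_[p] → ℝ := fun y =>
    if u y = u x then 0 else metricKernel U dE α x y * (u y - u x) with hg₁
  set g₂ : ℚ_[p] → ℝ := fun y =>
    if u y = u x then 0 else metricKernel U δ α x y * (u y - u x) with hg₂
  have hA : ∀ y, g₁ y = g₂ y + h y := by
    intro y
    by_cases huy : u y = u x
    · simp [hg₁, hg₂, hh, huy]
    · by_cases hv : v0 = vertexOf U y
      · simp [hg₁, hg₂, hh, huy, hv, metricKernel, hvx]
      · simp only [hg₁, hg₂, hh, metricKernel, hvx, if_neg huy, if_neg hv]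
        ring
  have hkey : ∀ ρ : V → V → ℝ, metricLaplacian μ U ρ α u x
      = ∫ y in Z, (if u y = u x then 0 else metricKernel U ρ α x y * (u y - u x)) ∂μ :=
    fun ρ => rfl
  -- the per-ball bound
  set C : V → ℝ := fun w =>
    if v0 = w then 0 else α * |dE v0 w - δ v0 w| / δ v0 w ^ (α + 1) * (2 * M) with hC
  have hCnonneg : ∀ w, 0 ≤ C w := by
    intro w
    by_cases hvw : v0 = w
    · simp [hC, hvw]
    · simp only [hC, if_neg hvw]
      have := Real.rpow_nonneg (le_of_lt (hδ_pos v0 w hvw)) (α + 1)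
      positivity
  have hbound : ∀ w, ∀ y ∈ U w, |h y| ≤ C w := by
    intro w y hy
    have hvy : vertexOf U y = w := vertexOf_eq hdisj hy
    by_cases huy : u y = u x
    · simpa [hh, huy] using hCnonneg w
    · by_cases hvw : v0 = w
      · simp [hh, huy, hvy, hvw, hCnonneg w]
        try exact hCnonneg w
      · have hδp : 0 < δ v0 w := hδ_pos v0 w hvw
        have hled : δ v0 w ≤ dE v0 w := hle v0 w
        have hker : |dE v0 w ^ (-α) - δ v0 w ^ (-α)|
            ≤ α * |dE v0 w - δ v0 w| / δ v0 w ^ (α + 1) := by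
          rw [abs_sub_comm, abs_of_nonneg
            (sub_nonneg.2 (Real.rpow_le_rpow_of_nonpos hδp hled (by linarith))),
            abs_of_nonneg (by linarith)]
          exact kernel_diff_le hδp hled hα
        have huu : |u y - u x| ≤ 2 * M := by
          calc |u y - u x| ≤ |u y| + |u x| := abs_sub _ _
            _ ≤ M + M := add_le_add (hMle y) (hMle x)
            _ = 2 * M := by ring
        simp only [hh, if_neg huy, hvy, if_neg hvw, hC, abs_mul]
        exact mul_le_mul hker huu (abs_nonneg _)
          (div_nonneg (mul_nonneg (by linarith) (abs_nonneg _))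
            (Real.rpow_nonneg hδp.le _))
  -- measurable version of h and integrability
  set h' : ℚ_[p] → ℝ := fun y => ∑ w : V, Set.indicator (U w)
    (fun y => if u y = u x then 0
      else if v0 = w then 0
      else (dE v0 w ^ (-α) - δ v0 w ^ (-α)) * (u y - u x)) y with hh'
  have hh'meas : Measurable h' := by
    apply Finset.measurable_sum
    intro w _
    apply Measurable.indicator _ (hUmeas w)
    apply Measurable.ite (hu_meas (measurableSet_singleton (u x))) measurable_const
    exact measurable_const.ite (MeasurableSet.const _)
      ((measurable_const.mul (hu_meas.sub measurable_const)))
  have hhh' : ∀ y ∈ Z, h y = h' y := by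
    intro y hy
    obtain ⟨w, hw⟩ : ∃ w, y ∈ U w := Set.mem_iUnion.mp hy
    have hvy : vertexOf U y = w := vertexOf_eq hdisj hw
    simp only [hh']
    rw [Finset.sum_eq_single w
      (fun w' _ hww' => Set.indicator_of_notMem
        (fun hyw' => Set.disjoint_left.mp (hdisj hww') hyw' hw) _)
      (fun habs => absurd (Finset.mem_univ w) habs),
      Set.indicator_of_mem hw]
    simp [hh, hvy]
  set B : ℝ := ∑ w : V, C w with hB
  have hCB : ∀ w, C w ≤ B :=
    fun w => Finset.single_le_sum (fun w _ => hCnonneg w) (Finset.mem_univ w)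
  have hInth : IntegrableOn h Z μ := by
    apply Integrable.congr (f := h')
    · apply Integrable.mono' (g := fun _ => B)
        (integrableOn_const hZfin.ne) hh'meas.aestronglyMeasurable
      rw [ae_restrict_iff' hZmeas]
      refine ae_of_all _ fun y hy => ?_
      obtain ⟨w, hw⟩ : ∃ w, y ∈ U w := Set.mem_iUnion.mp hy
      rw [Real.norm_eq_abs, ← hhh' y hy]
      exact (hbound w y hw).trans (hCB w)
    · rw [Filter.EventuallyEq, ae_restrict_iff' hZmeas]
      exact ae_of_all _ fun y hy => (hhh' y hy).symm
  -- the central estimate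
  have hRHSterm_nonneg : ∀ q : V × V, q ∈ Finset.univ.filter (fun q : V × V => q.1 ≠ q.2) →
      0 ≤ (α * |dE q.1 q.2 - δ q.1 q.2| / δ q.1 q.2 ^ (α + 1)) * (μ (U q.2)).toReal := by
    intro q hq
    have hq' : q.1 ≠ q.2 := (Finset.mem_filter.mp hq).2
    have := Real.rpow_nonneg (hδ_pos q.1 q.2 hq').le (α + 1)
    have := ENNReal.toReal_nonneg (a := μ (U q.2))
    positivity
  have hRHS_nonneg : 0 ≤ 2 * M *
      ∑ q ∈ Finset.univ.filter (fun q : V × V => q.1 ≠ q.2),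
        (α * |dE q.1 q.2 - δ q.1 q.2| / δ q.1 q.2 ^ (α + 1)) * (μ (U q.2)).toReal :=
    mul_nonneg (by linarith) (Finset.sum_nonneg hRHSterm_nonneg)
  have hcentral : |∫ y in Z, h y ∂μ| ≤ 2 * M *
      ∑ q ∈ Finset.univ.filter (fun q : V × V => q.1 ≠ q.2),
        (α * |dE q.1 q.2 - δ q.1 q.2| / δ q.1 q.2 ^ (α + 1)) * (μ (U q.2)).toReal := by
    have hsplit : ∫ y in Z, h y ∂μ = ∑ w : V, ∫ y in U w, h y ∂μ :=
      integral_iUnion_fintype hUmeas hdisj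
        (fun w => hInth.mono_set (Set.subset_iUnion U w))
    rw [hsplit]
    calc |∑ w : V, ∫ y in U w, h y ∂μ| ≤ ∑ w : V, |∫ y in U w, h y ∂μ| :=
          Finset.abs_sum_le_sum_abs _ _
      _ ≤ ∑ w : V, C w * (μ (U w)).toReal := by
          apply Finset.sum_le_sum
          intro w _
          have := norm_setIntegral_le_of_norm_le_const (f := h) (C := C w)
            (hUfin w)
            (fun y hy => by rw [Real.norm_eq_abs]; exact hbound w y hy)
          simpa [Measure.real] using this
      _ ≤ 2 * M * ∑ q ∈ Finset.univ.filter (fun q : V × V => q.1 ≠ q.2),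
            (α * |dE q.1 q.2 - δ q.1 q.2| / δ q.1 q.2 ^ (α + 1)) * (μ (U q.2)).toReal := by
          rw [← Finset.sum_filter_add_sum_filter_not Finset.univ (fun w => v0 = w)]
          have hz : ∑ w ∈ Finset.univ.filter (fun w => v0 = w), C w * (μ (U w)).toReal = 0 := by
            apply Finset.sum_eq_zero
            intro w hw
            simp [hC, (Finset.mem_filter.mp hw).2]
          rw [hz, zero_add]
          set F : V × V → ℝ := fun q =>
            (α * |dE q.1 q.2 - δ q.1 q.2| / δ q.1 q.2 ^ (α + 1)) * (μ (U q.2)).toReal with hF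
          have step1 : ∑ w ∈ Finset.univ.filter (fun w => ¬ v0 = w), C w * (μ (U w)).toReal
              = ∑ q ∈ (Finset.univ.filter (fun w => ¬ v0 = w)).image (Prod.mk v0),
                  2 * M * F q := by
            rw [Finset.sum_image (fun a _ b _ hab => (Prod.ext_iff.mp hab).2)]
            apply Finset.sum_congr rfl
            intro w hw
            simp only [hC, if_neg (Finset.mem_filter.mp hw).2, hF]
            try ring
          rw [step1, Finset.mul_sum]
          apply Finset.sum_le_sum_of_subset_of_nonneg
          · intro q hq
            simp only [Finset.mem_image, Finset.mem_filter, Finset.mem_univ, true_and] at hq ⊢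
            obtain ⟨w, hw, rfl⟩ := hq
            exact hw
          · intro q hq _
            exact mul_nonneg (by linarith) (hRHSterm_nonneg q hq)
  -- case split on integrability
  by_cases hint : IntegrableOn g₂ Z μ
  · have hint1 : IntegrableOn g₁ Z μ := by
      rw [show g₁ = fun y => g₂ y + h y from funext hA]
      exact hint.add hInth
    rw [hkey dE, hkey δ]
    have : (∫ y in Z, g₁ y ∂μ) = (∫ y in Z, g₂ y ∂μ) + ∫ y in Z, h y ∂μ := by
      rw [show g₁ = fun y => g₂ y + h y from funext hA]
      exact integral_add hint hInth
    rw [show (∫ y in Z, (if u y = u x then 0 else metricKernel U dE α x y * (u y - u x)) ∂μ) = ∫ y in Z, g₁ y ∂μ from rfl,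
        show (∫ y in Z, (if u y = u x then 0 else metricKernel U δ α x y * (u y - u x)) ∂μ) = ∫ y in Z, g₂ y ∂μ from rfl,
        this]
    simpa using hcentral
  · have hint1 : ¬ IntegrableOn g₁ Z μ := by
      intro H
      apply hint
      have : g₂ = fun y => g₁ y - h y := funext fun y => by rw [hA y]; ring
      rw [this]
      exact H.sub hInth
    rw [hkey dE, hkey δ]
    rw [show (∫ y in Z, (if u y = u x then 0 else metricKernel U dE α x y * (u y - u x)) ∂μ) = ∫ y in Z, g₁ y ∂μ from rfl,
        show (∫ y in Z, (if u y = u x then 0 else metricKernel U δ α x y * (u y - u x)) ∂μ) = ∫ y in Z, g₂ y ∂μ from rfl,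
        integral_undef hint1, integral_undef hint]
    simpa using hRHS_nonneg
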